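/- Let d be a squarefree positive integer, p an odd prime, and b, r positive integers, let t be an odd positive integer, and ε ∈ {1, −1}, μ ∈ {1, −1}. If p + r·√(−d) = ε·(1 + μ·b·√(−d))^t in the ring ℤ[√(−d)] (that is, the case a = 1), then p ≡ 1 (mod d) or p ≡ −1 (mod d). -/

import Mathlib

/-- Let `d` be a squarefree positive integer, `p` an odd prime, `b, r` positive integers,
`t` an odd positive integer, and `ε, μ ∈ {1, −1}`. If
`p + r√(−d) = ε(1 + μb√(−d))ᵗ` in `ℤ[√(−d)]` (the case `a = 1`), then `p ≡ 1 (mod d)` or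
`p ≡ −1 (mod d)`. -/
theorem modEq_of_eq_pow_in_Zsqrtd_a_eq_one
    (d p b r t : ℕ) (hd : Squarefree (d : ℤ)) (hdpos : 0 < d)
    (hp : p.Prime) (hpodd : Odd p) (hb : 0 < b) (hr : 0 < r)
    (ht : Odd t) (htpos : 0 < t) (ε μ : ℤ) (hε : ε = 1 ∨ ε = -1) (hμ : μ = 1 ∨ μ = -1)
    (heq : (⟨(p : ℤ), (r : ℤ)⟩ : Zsqrtd (-(d : ℤ))) =
      (ε : Zsqrtd (-(d : ℤ))) * (⟨1, μ * (b : ℤ)⟩ : Zsqrtd (-(d : ℤ))) ^ t) :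
    (p : ℤ) ≡ 1 [ZMOD (d : ℤ)] ∨ (p : ℤ) ≡ -1 [ZMOD (d : ℤ)] := by
  set z : Zsqrtd (-(d : ℤ)) := ⟨1, μ * (b : ℤ)⟩ with hz
  have key : ∀ n : ℕ, ((z ^ n).re : ℤ) ≡ 1 [ZMOD (d : ℤ)] := by
    intro n
    induction n with
    | zero => simp [Int.ModEq.refl]
    | succ n ih =>
      have hre : (z ^ (n + 1)).re =
          (z ^ n).re + (d : ℤ) * (-((z ^ n).im * (μ * (b : ℤ)))) := by
        rw [pow_succ, Zsqrtd.re_mul]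
        simp [hz]
        ring
      calc ((z ^ (n+1)).re : ℤ) ≡ (z ^ n).re + (d : ℤ) * (-((z ^ n).im * (μ * (b : ℤ)))) [ZMOD (d:ℤ)] := by rw [hre]
        _ ≡ (z ^ n).re + 0 [ZMOD (d : ℤ)] := Int.ModEq.add_left _ (Int.modEq_zero_iff_dvd.mpr ⟨_, rfl⟩)
        _ ≡ 1 [ZMOD (d : ℤ)] := by simpa using ih
  have hpre : (p : ℤ) = ε * (z ^ t).re := by
    have := congrArg Zsqrtd.re heq
    simpa [Zsqrtd.re_smul] using this
  rcases hε with h | h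
  · left
    rw [hpre, h, one_mul]
    exact key t
  · right
    rw [hpre, h]
    have := (key t).neg
    simpa using this
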